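/- Let a(n) satisfy a(0)=3, a(1)=0, a(2)=−4, a(n)=−2a(n-2)−2a(n-3) for n ≥ 3. Then for every i ≥ 2, 2^i divides a(2^i). -/
import Mathlib

private def Mc : Matrix (Fin 3) (Fin 3) ℤ := !![0,1,0; 0,0,1; -2,-2,0]

private def E2 (A : Matrix (Fin 3) (Fin 3) ℤ) : ℤ :=
  (A 0 0 * A 1 1 - A 0 1 * A 1 0) + (A 0 0 * A 2 2 - A 0 2 * A 2 0) +
  (A 1 1 * A 2 2 - A 1 2 * A 2 1)

private lemma trace_sq (A : Matrix (Fin 3) (Fin 3) ℤ) :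
    Matrix.trace (A * A) = (Matrix.trace A)^2 - 2 * E2 A := by
  simp [Matrix.trace, Matrix.diag, Matrix.mul_apply, Fin.sum_univ_three, E2]
  ring

private lemma E2_sq (A : Matrix (Fin 3) (Fin 3) ℤ) :
    E2 (A * A) = (E2 A)^2 - 2 * Matrix.trace A * A.det := by
  simp [Matrix.trace, Matrix.diag, Matrix.mul_apply, Fin.sum_univ_three, E2,
    Matrix.det_fin_three]
  ring

private lemma Mc_cube : Mc ^ 3 = (-2 : ℤ) • Mc + (-2 : ℤ) • 1 := by
  ext i j
  simp only [Matrix.add_apply, Matrix.smul_apply, Matrix.one_apply, smul_eq_mul]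
  fin_cases i <;> fin_cases j <;>
    simp [Mc, pow_succ, Matrix.mul_apply, Fin.sum_univ_three]

private lemma trace_rec (n : ℕ) :
    Matrix.trace (Mc ^ (n + 3)) =
      -2 * Matrix.trace (Mc ^ (n + 1)) - 2 * Matrix.trace (Mc ^ n) := by
  have h : Mc ^ (n + 3) = Mc ^ n * Mc ^ 3 := by rw [pow_add]
  rw [h, Mc_cube, mul_add, Matrix.trace_add, Matrix.mul_smul, Matrix.mul_smul,
    Matrix.trace_smul, Matrix.trace_smul, mul_one, ← pow_succ]
  simp [smul_eq_mul]
  ring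

private lemma trace0 : Matrix.trace (Mc ^ 0) = 3 := by
  simp [Matrix.trace, Matrix.diag, Matrix.one_apply, Fin.sum_univ_three]

private lemma trace1 : Matrix.trace (Mc ^ 1) = 0 := by
  simp [Mc, Matrix.trace, Matrix.diag, Fin.sum_univ_three]

private lemma trace2 : Matrix.trace (Mc ^ 2) = -4 := by
  simp [Mc, pow_two, Matrix.trace, Matrix.diag, Matrix.mul_apply, Fin.sum_univ_three]

private lemma E2two : E2 (Mc ^ 2) = 4 := by
  simp [Mc, pow_two, E2, Matrix.mul_apply, Fin.sum_univ_three]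

theorem thm4_pseudoprimes (a : ℕ → ℤ)
    (h0 : a 0 = 3) (h1 : a 1 = 0) (h2 : a 2 = -4)
    (hrec : ∀ n, 3 ≤ n → a n = -2 * a (n - 2) - 2 * a (n - 3)) :
    ∀ i : ℕ, 2 ≤ i → ((2 ^ i : ℕ) : ℤ) ∣ a (2 ^ i) := by
  -- a n = trace (Mc ^ n)
  have ha : ∀ n, a n = Matrix.trace (Mc ^ n) := by
    intro n
    induction n using Nat.strong_induction_on with
    | _ n ih =>
      match n with
      | 0 => rw [h0, trace0]
      | 1 => rw [h1, trace1]
      | 2 => rw [h2, trace2]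
      | (k+3) =>
        rw [hrec (k+3) (by omega)]
        have e1 : k + 3 - 2 = k + 1 := by omega
        have e2 : k + 3 - 3 = k := by omega
        rw [e1, e2, ih (k+1) (by omega), ih k (by omega), trace_rec]
  -- main induction
  have key : ∀ j : ℕ, ((2 ^ (j+1) : ℤ)) ∣ Matrix.trace (Mc ^ (2 ^ (j+1))) ∧
      ((2 ^ (j+1) : ℤ)) ∣ E2 (Mc ^ (2 ^ (j+1))) := by
    intro j
    induction j with
    | zero =>
      refine ⟨⟨-2, ?_⟩, ⟨2, ?_⟩⟩ <;> norm_num [trace2, E2two]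
    | succ j ih =>
      obtain ⟨⟨u, hu⟩, ⟨v, hv⟩⟩ := ih
      have hpow : Mc ^ (2 ^ (j+2)) = Mc ^ (2 ^ (j+1)) * Mc ^ (2 ^ (j+1)) := by
        rw [← pow_add]
        congr 1
        ring
      constructor
      · rw [hpow, trace_sq, hu, hv]
        exact ⟨2 ^ j * u ^ 2 - v, by ring⟩
      · rw [hpow, E2_sq, hu, hv]
        exact ⟨2 ^ j * v ^ 2 - u * (Mc ^ (2 ^ (j+1))).det, by ring⟩
  intro i hi
  obtain ⟨j, rfl⟩ : ∃ j, i = j + 1 := ⟨i - 1, by omega⟩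
  rw [ha]
  have := (key j).1
  push_cast
  exact this
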